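/- Let k ≥ 1 and a ∈ (0,1). If M_{k,a} is differentiable at a point x ∈ (0,1) (i.e., the limit of the difference quotients (M_{k,a}(y) − M_{k,a}(x))/(y−x) as y → x exists as a finite real number), then M_{k,a}'(x) = 0. -/

import Mathlib

open Filter Topology MeasureTheory Set
open scoped ENNReal

/-- The `(n+1)`-th ternary digit of `x` (choosing the expansion ending in all `0`s
when two expansions exist, and the all-`2`s expansion for `x = 1`). -/
noncomputable def tDigit (x : ℝ) (n : ℕ) : ℕ :=
  if x = 1 then 2 else (⌊(3:ℝ) ^ (n + 1) * x⌋ - 3 * ⌊(3:ℝ) ^ n * x⌋).toNat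

/-- `l_n(x)`: the number of `1`s among the first `n` ternary digits of `x`. -/
noncomputable def lCount (x : ℝ) (n : ℕ) : ℕ :=
  ((Finset.range n).filter (fun i => tDigit x i = 1)).card

/-- `q_a(d)` with `q_a(0)=0`, `q_a(1)=a`, `q_a(2)=1-a`. -/
noncomputable def qDig (a : ℝ) (d : ℕ) : ℝ :=
  if d = 0 then 0 else if d = 1 then a else 1 - a

/-- Okamoto's function `F_a`. -/
noncomputable def Okamoto (a x : ℝ) : ℝ :=
  ∑' n : ℕ, a ^ (n - lCount x n) * (1 - 2 * a) ^ lCount x n * qDig a (tDigit x n)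

/-- `M_{k,a}(x)`: the `k`-th partial derivative of `F_a(x)` with respect to `a`. -/
noncomputable def Mfun (k : ℕ) (a x : ℝ) : ℝ :=
  iteratedDeriv k (fun b => Okamoto b x) a

/-- `f` has derivative `+∞` at `x` (difference quotients over `y ∈ [0,1] \ {x}`). -/
def derivPInf (f : ℝ → ℝ) (x : ℝ) : Prop :=
  Tendsto (fun y => (f y - f x) / (y - x)) (𝓝[Set.Icc 0 1 \ {x}] x) atTop

/-- `f` has derivative `-∞` at `x`. -/
def derivMInf (f : ℝ → ℝ) (x : ℝ) : Prop :=
  Tendsto (fun y => (f y - f x) / (y - x)) (𝓝[Set.Icc 0 1 \ {x}] x) atBot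

noncomputable def phiOk (a : ℝ) : ℝ :=
  if a = 1/3 then 1/3 else if a = 1/2 then 0
  else Real.log (3 * a) / (Real.log a - Real.log |1 - 2 * a|)

noncomputable def C0 (a : ℝ) : ℝ := 1 / (Real.log a - Real.log |1 - 2 * a|)

noncomputable def hEnt (p : ℝ) : ℝ :=
  (-(p * Real.log p) - (1 - p) * Real.log (1 - p) + (1 - p) * Real.log 2) / Real.log 3

noncomputable def dOk (a : ℝ) : ℝ := hEnt (phiOk a)

noncomputable def dTilde (a : ℝ) : ℝ := hEnt (1 - 2 * a)

/- ### auxiliary development -/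

noncomputable def md (b : ℝ) (e : ℕ) : ℝ := if e = 1 then 1 - 2*b else b

noncomputable def sE (e : ℕ) : ℝ := if e = 1 then (-2:ℝ) else 1
noncomputable def cE (e : ℕ) : ℝ := if e = 1 then (1:ℝ) else 0

lemma md_eq (b : ℝ) (e : ℕ) : md b e = cE e + sE e * b := by
  unfold md cE sE; split <;> ring

lemma contDiff_md (e : ℕ) : ContDiff ℝ (⊤:ℕ∞) (fun b : ℝ => md b e) := by
  unfold md; split
  · exact contDiff_const.sub (contDiff_const.mul contDiff_id)
  · exact contDiff_id

lemma contDiff_qDig (e : ℕ) : ContDiff ℝ (⊤:ℕ∞) (fun b : ℝ => qDig b e) := by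
  unfold qDig; split
  · exact contDiff_const
  · split
    · exact contDiff_id
    · exact contDiff_const.sub contDiff_id

def ndig (n m i : ℕ) : ℕ := m / 3^(n-1-i) % 3

lemma prod_md_eq (b x : ℝ) (i : ℕ) :
    (∏ j ∈ Finset.range i, md b (tDigit x j))
      = b ^ (i - lCount x i) * (1 - 2*b) ^ lCount x i := by
  rw [← Finset.prod_filter_mul_prod_filter_not (Finset.range i) (fun j => tDigit x j = 1)]
  have h1 : (∏ j ∈ (Finset.range i).filter (fun j => tDigit x j = 1), md b (tDigit x j))
      = (1 - 2*b) ^ lCount x i := by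
    rw [Finset.prod_congr rfl (fun j hj => ?_), Finset.prod_const]
    · rfl
    · simp only [Finset.mem_filter] at hj
      simp [md, hj.2]
  have h2 : (∏ j ∈ (Finset.range i).filter (fun j => ¬ tDigit x j = 1), md b (tDigit x j))
      = b ^ (i - lCount x i) := by
    rw [Finset.prod_congr rfl (fun j hj => ?_), Finset.prod_const]
    · congr 1
      have := Finset.card_filter_add_card_filter_not
        (s := Finset.range i) (p := fun j => tDigit x j = 1)
      simp only [Finset.card_range] at this
      unfold lCount
      omega
    · simp only [Finset.mem_filter] at hj
      simp [md, hj.2]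
  rw [h1, h2, mul_comm]

lemma floor_pow_div (x : ℝ) (hx : 0 ≤ x) {i n : ℕ} (h : i ≤ n) :
    ⌊(3:ℝ)^n * x⌋₊ / 3^(n-i) = ⌊(3:ℝ)^i * x⌋₊ := by
  have hpow : (3:ℝ)^i * (3:ℝ)^(n-i) = 3^n := by
    rw [← pow_add]; congr 1; omega
  have h3 : ((3:ℝ)^n * x) / ((3^(n-i) : ℕ) : ℝ) = (3:ℝ)^i * x := by
    push_cast
    rw [div_eq_iff (by positivity), ← hpow]
    ring
  rw [← Nat.floor_div_natCast ((3:ℝ)^n * x) (3^(n-i)), h3]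

lemma three_mul_floor_le (y : ℝ) : 3 * ⌊y⌋₊ ≤ ⌊3*y⌋₊ := by
  rcases le_or_gt 0 y with hy | hy
  · have : ((3 * ⌊y⌋₊ : ℕ) : ℝ) ≤ 3*y := by
      push_cast
      nlinarith [Nat.floor_le hy]
    exact Nat.le_floor this
  · simp [Nat.floor_of_nonpos hy.le]

lemma tDigit_eq_nat (x : ℝ) (hx0 : 0 ≤ x) (hx1 : x ≠ 1) (i : ℕ) :
    tDigit x i = ⌊(3:ℝ)^(i+1) * x⌋₊ - 3 * ⌊(3:ℝ)^i * x⌋₊ := by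
  unfold tDigit
  rw [if_neg hx1]
  have e1 : ⌊(3:ℝ) ^ (i+1) * x⌋ = (⌊(3:ℝ)^(i+1) * x⌋₊ : ℤ) :=
    (Int.natCast_floor_eq_floor (by positivity)).symm
  have e2 : ⌊(3:ℝ) ^ i * x⌋ = (⌊(3:ℝ)^i * x⌋₊ : ℤ) :=
    (Int.natCast_floor_eq_floor (by positivity)).symm
  rw [e1, e2]
  omega

lemma tDigit_le_floor (x : ℝ) (i : ℕ) :
    3 * ⌊(3:ℝ)^i * x⌋₊ ≤ ⌊(3:ℝ)^(i+1) * x⌋₊ := by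
  have := three_mul_floor_le ((3:ℝ)^i * x)
  have h3 : (3:ℝ) * ((3:ℝ)^i * x) = (3:ℝ)^(i+1) * x := by ring
  rwa [h3] at this

lemma tDigit_ratCast {n m : ℕ} (hm : m < 3^n) {i : ℕ} (hi : i < n) :
    tDigit ((m:ℝ)/3^n) i = ndig n m i := by
  set u : ℝ := (m:ℝ)/3^n with hu
  have hu0 : 0 ≤ u := by positivity
  have hu1 : u ≠ 1 := by
    have : u < 1 := by
      rw [hu, div_lt_one (by positivity)]
      exact_mod_cast hm
    exact this.ne
  have key : ∀ l : ℕ, l ≤ n → ⌊(3:ℝ)^l * u⌋₊ = m / 3^(n-l) := by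
    intro l hl
    have h2 : ⌊(3:ℝ)^n * u⌋₊ = m := by
      rw [hu, mul_div_cancel₀ (m:ℝ) (by positivity : ((3:ℝ)^n) ≠ 0)]
      exact Nat.floor_natCast m
    have := floor_pow_div u hu0 hl
    rw [h2] at this
    exact this.symm
  rw [tDigit_eq_nat u hu0 hu1 i, key (i+1) hi, key i hi.le]
  unfold ndig
  have h1 : n - i = (n - 1 - i) + 1 := by omega
  have h2 : n - (i+1) = n - 1 - i := by omega
  rw [h1, h2, pow_succ, ← Nat.div_div_eq_div_mul]
  omega

lemma tDigit_ratCast_zero {n m : ℕ} (hm : m < 3^n) {i : ℕ} (hi : n ≤ i) :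
    tDigit ((m:ℝ)/3^n) i = 0 := by
  set u : ℝ := (m:ℝ)/3^n with hu
  have hu0 : 0 ≤ u := by positivity
  have hu1 : u ≠ 1 := by
    have : u < 1 := by
      rw [hu, div_lt_one (by positivity)]
      exact_mod_cast hm
    exact this.ne
  have key : ∀ l : ℕ, n ≤ l → ⌊(3:ℝ)^l * u⌋₊ = m * 3^(l-n) := by
    intro l hl
    have hpow : (3:ℝ)^(l-n) * (3:ℝ)^n = 3^l := by
      rw [← pow_add]; congr 1; omega
    have harg : (3:ℝ)^l * u = ((m * 3^(l-n) : ℕ) : ℝ) := by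
      rw [hu]
      push_cast
      rw [mul_div_assoc', div_eq_iff (by positivity : ((3:ℝ)^n) ≠ 0), mul_assoc, hpow]
      ring
    rw [harg, Nat.floor_natCast]
  rw [tDigit_eq_nat u hu0 hu1 i, key (i+1) (by omega), key i hi]
  have h3 : 3 * (m * 3 ^ (i - n)) = m * 3^(i+1-n) := by
    rw [← mul_assoc, mul_comm 3 m, mul_assoc]
    congr 1
    rw [← pow_succ']
    congr 1
    omega
  omega

lemma okamoto_ratCast (b : ℝ) {n m : ℕ} (hm : m < 3^n) :
    Okamoto b ((m:ℝ)/3^n)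
      = ∑ i ∈ Finset.range n,
          (∏ j ∈ Finset.range i, md b (ndig n m j)) * qDig b (ndig n m i) := by
  unfold Okamoto
  rw [tsum_eq_sum (s := Finset.range n) ?side]
  case side =>
    intro i hi
    simp only [Finset.mem_range, not_lt] at hi
    rw [tDigit_ratCast_zero hm hi]
    simp [qDig]
  refine Finset.sum_congr rfl (fun i hi => ?_)
  simp only [Finset.mem_range] at hi
  rw [← prod_md_eq b ((m:ℝ)/3^n) i]
  congr 1
  · refine Finset.prod_congr rfl (fun j hj => ?_)
    simp only [Finset.mem_range] at hj
    rw [tDigit_ratCast hm (lt_trans hj hi)]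
  · rw [tDigit_ratCast hm hi]

lemma ndig_shift {n i : ℕ} (m : ℕ) (hi : i < n) : ndig (n+1) m i = ndig n (m/3) i := by
  unfold ndig
  have h1 : n + 1 - 1 - i = (n - 1 - i) + 1 := by omega
  rw [h1, pow_succ', ← Nat.div_div_eq_div_mul]

lemma ndig_last (n m : ℕ) : ndig (n+1) m n = m % 3 := by
  unfold ndig
  simp

lemma okamoto_inc : ∀ n m : ℕ, m + 1 < 3^n → ∀ b : ℝ,
    Okamoto b (((m+1 : ℕ) : ℝ)/3^n) - Okamoto b ((m:ℝ)/3^n)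
      = ∏ i ∈ Finset.range n, md b (ndig n m i) := by
  intro n
  induction n with
  | zero => intro m hm; omega
  | succ n ih =>
    intro m hm b
    have hm1 : m + 1 < 3^(n+1) := hm
    have hmlt : m < 3^(n+1) := by omega
    rcases Nat.lt_or_ge (m % 3) 2 with hr | hr
    · -- no carry case
      have hdiv : (m+1)/3 = m/3 := by omega
      have hmod : (m+1)%3 = m%3 + 1 := by omega
      rw [okamoto_ratCast b (n := n+1) (m := m+1) hm1,
          okamoto_ratCast b (n := n+1) (m := m) hmlt]
      rw [Finset.sum_range_succ, Finset.sum_range_succ, Finset.prod_range_succ]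
      have hpre : ∀ i, i < n → ndig (n+1) (m+1) i = ndig (n+1) m i := by
        intro i hi
        rw [ndig_shift (m+1) hi, ndig_shift m hi, hdiv]
      have hsum : (∑ i ∈ Finset.range n,
            (∏ j ∈ Finset.range i, md b (ndig (n+1) (m+1) j)) * qDig b (ndig (n+1) (m+1) i))
          = ∑ i ∈ Finset.range n,
            (∏ j ∈ Finset.range i, md b (ndig (n+1) m j)) * qDig b (ndig (n+1) m i) := by
        refine Finset.sum_congr rfl (fun i hi => ?_)
        simp only [Finset.mem_range] at hi
        rw [hpre i hi]
        congr 1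
        exact Finset.prod_congr rfl (fun j hj => by
          simp only [Finset.mem_range] at hj; rw [hpre j (lt_trans hj hi)])
      have hprodeq : (∏ j ∈ Finset.range n, md b (ndig (n+1) (m+1) j))
          = ∏ j ∈ Finset.range n, md b (ndig (n+1) m j) :=
        Finset.prod_congr rfl (fun j hj => by
          simp only [Finset.mem_range] at hj; rw [hpre j hj])
      rw [hsum, hprodeq, ndig_last, ndig_last, hmod]
      have hq : qDig b (m % 3 + 1) - qDig b (m % 3) = md b (m % 3) := by
        interval_cases h : m % 3
        · simp [qDig, md]
        · simp [qDig, md]; ring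
      linear_combination (∏ j ∈ Finset.range n, md b (ndig (n+1) m j)) * hq
    · -- carry case : m % 3 = 2
      have hr2 : m % 3 = 2 := by omega
      set m' := m / 3 with hm'
      have hmm : m = 3*m' + 2 := by omega
      have hup : m + 1 = 3*(m'+1) := by omega
      have hm'1 : m' + 1 < 3^n := by
        have h33 : 3*(m'+1) < 3*3^n := by
          rw [← hup]
          calc m+1 < 3^(n+1) := hm1
          _ = 3*3^n := by ring
        omega
      have hupR : ((m:ℝ)+1) = 3*((m':ℝ)+1) := by exact_mod_cast hup
      have hv : ((m+1 : ℕ) : ℝ)/3^(n+1) = ((m'+1 : ℕ):ℝ)/3^n := by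
        push_cast
        rw [div_eq_div_iff (by positivity) (by positivity), hupR, pow_succ]
        ring
      have hprodshift : (∏ j ∈ Finset.range n, md b (ndig (n+1) m j))
          = ∏ j ∈ Finset.range n, md b (ndig n m' j) :=
        Finset.prod_congr rfl (fun j hj => by
          simp only [Finset.mem_range] at hj; rw [ndig_shift m hj])
      have hsumshift : (∑ i ∈ Finset.range n,
            (∏ j ∈ Finset.range i, md b (ndig (n+1) m j)) * qDig b (ndig (n+1) m i))
          = ∑ i ∈ Finset.range n,
            (∏ j ∈ Finset.range i, md b (ndig n m' j)) * qDig b (ndig n m' i) := by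
        refine Finset.sum_congr rfl (fun i hi => ?_)
        simp only [Finset.mem_range] at hi
        rw [ndig_shift m hi]
        congr 1
        exact Finset.prod_congr rfl (fun j hj => by
          simp only [Finset.mem_range] at hj; rw [ndig_shift m (lt_trans hj hi)])
      have hO : Okamoto b ((m:ℝ)/3^(n+1))
          = Okamoto b ((m':ℝ)/3^n)
            + (∏ j ∈ Finset.range n, md b (ndig n m' j)) * (1 - b) := by
        rw [okamoto_ratCast b (n := n+1) (m := m) hmlt,
            okamoto_ratCast b (n := n) (m := m') (by omega),
            Finset.sum_range_succ, hsumshift, hprodshift, ndig_last, hr2]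
        have : qDig b 2 = 1 - b := by simp [qDig]
        rw [this]
      have hIH := ih m' hm'1 b
      have hvv : Okamoto b (((m+1:ℕ):ℝ)/3^(n+1)) = Okamoto b (((m'+1:ℕ):ℝ)/3^n) := by
        rw [hv]
      have hprodtarget : (∏ i ∈ Finset.range (n+1), md b (ndig (n+1) m i))
          = (∏ j ∈ Finset.range n, md b (ndig n m' j)) * b := by
        rw [Finset.prod_range_succ, hprodshift, ndig_last, hr2]
        have : md b 2 = b := by simp [md]
        rw [this]
      rw [hvv, hO, hprodtarget]
      linear_combination hIH

example : True := trivial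

/- ### iterated derivative helpers -/

lemma itder_const_mul (e : ℝ) {f : ℝ → ℝ} (hf : ContDiff ℝ (⊤:ℕ∞) f) (j : ℕ) (a : ℝ) :
    iteratedDeriv j (fun y => e * f y) a = e * iteratedDeriv j f a := by
  rw [← iteratedDerivWithin_univ, ← iteratedDerivWithin_univ]
  exact iteratedDerivWithin_const_mul (Set.mem_univ a) uniqueDiffOn_univ e
    (hf.contDiffWithinAt.of_le (by exact_mod_cast (le_top : (j:ℕ∞) ≤ ⊤)))

lemma itder_add {f g : ℝ → ℝ} (hf : ContDiff ℝ (⊤:ℕ∞) f) (hg : ContDiff ℝ (⊤:ℕ∞) g)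
    (j : ℕ) (a : ℝ) :
    iteratedDeriv j (fun y => f y + g y) a = iteratedDeriv j f a + iteratedDeriv j g a := by
  rw [← iteratedDerivWithin_univ, ← iteratedDerivWithin_univ, ← iteratedDerivWithin_univ]
  exact iteratedDerivWithin_add (Set.mem_univ a) uniqueDiffOn_univ
    (hf.contDiffWithinAt.of_le (by exact_mod_cast (le_top : (j:ℕ∞) ≤ ⊤)))
    (hg.contDiffWithinAt.of_le (by exact_mod_cast (le_top : (j:ℕ∞) ≤ ⊤)))

lemma itder_affine_mul (c e : ℝ) :
    ∀ (m : ℕ) (f : ℝ → ℝ), ContDiff ℝ (⊤:ℕ∞) f → ∀ a : ℝ,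
      iteratedDeriv (m+1) (fun b => (c + e*b) * f b) a
        = (c + e*a) * iteratedDeriv (m+1) f a + ((m:ℝ)+1) * e * iteratedDeriv m f a := by
  intro m
  induction m with
  | zero =>
    intro f hf a
    rw [iteratedDeriv_one, iteratedDeriv_one, iteratedDeriv_zero]
    have hfd : HasDerivAt f (deriv f a) a :=
      ((hf.differentiable (by simp)) a).hasDerivAt
    have hl : HasDerivAt (fun b : ℝ => c + e*b) e a := by
      simpa using ((hasDerivAt_id a).const_mul e).const_add c
    rw [show deriv (fun b => (c + e*b) * f b) a = _ from (hl.mul hfd).deriv]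
    push_cast
    ring
  | succ m IH =>
    intro f hf a
    have hf' : ContDiff ℝ (⊤:ℕ∞) (deriv f) := (contDiff_infty_iff_deriv.mp hf).2
    have hderiv : deriv (fun b => (c + e*b) * f b)
        = fun y => e * f y + (c + e*y) * deriv f y := by
      funext y
      have hfd : HasDerivAt f (deriv f y) y :=
        ((hf.differentiable (by simp)) y).hasDerivAt
      have hl : HasDerivAt (fun b : ℝ => c + e*b) e y := by
        simpa using ((hasDerivAt_id y).const_mul e).const_add c
      exact (hl.mul hfd).deriv
    rw [iteratedDeriv_succ' (n := m+1), hderiv]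
    have h1 : ContDiff ℝ (⊤:ℕ∞) (fun y => e * f y) := contDiff_const.mul hf
    have h2 : ContDiff ℝ (⊤:ℕ∞) (fun y => (c + e*y) * deriv f y) :=
      ((contDiff_const.add (contDiff_const.mul contDiff_id)).mul hf')
    rw [itder_add h1 h2 (m+1) a, itder_const_mul e hf (m+1) a, IH (deriv f) hf' a]
    rw [← iteratedDeriv_succ' (n := m+1), ← iteratedDeriv_succ' (n := m)]
    push_cast
    ring

/- ### the product function G -/

noncomputable def Gfun (x : ℝ) (n : ℕ) (b : ℝ) : ℝ := ∏ i ∈ Finset.range n, md b (tDigit x i)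

lemma Gfun_succ (x : ℝ) (n : ℕ) :
    Gfun x (n+1) = fun b => (cE (tDigit x n) + sE (tDigit x n) * b) * Gfun x n b := by
  funext b
  rw [← md_eq]
  unfold Gfun
  rw [Finset.prod_range_succ, mul_comm]

lemma contDiff_G (x : ℝ) : ∀ n, ContDiff ℝ (⊤:ℕ∞) (Gfun x n) := by
  intro n
  induction n with
  | zero =>
    have : Gfun x 0 = fun _ => (1:ℝ) := by funext b; simp [Gfun]
    rw [this]; exact contDiff_const
  | succ n ihn =>
    rw [Gfun_succ]
    exact (contDiff_const.add (contDiff_const.mul contDiff_id)).mul ihn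

example : True := trivial

/- ### sandwich lemma for derivative -/

lemma sandwich {f : ℝ → ℝ} {x d : ℝ} (hd : HasDerivAt f d x) {u v : ℕ → ℝ}
    (hu : ∀ n, u n ≤ x) (hv : ∀ n, x ≤ v n) (huv : ∀ n, u n < v n)
    (hlen : Tendsto (fun n => v n - u n) atTop (𝓝 0)) :
    Tendsto (fun n => (f (v n) - f (u n)) / (v n - u n)) atTop (𝓝 d) := by
  rw [Metric.tendsto_nhds]
  intro ε hε
  have hlo := hasDerivAt_iff_isLittleO.mp hd
  have hc : (0:ℝ) < ε/4 := by linarith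
  have hev : ∀ᶠ y in 𝓝 x, ‖f y - f x - (y - x) • d‖ ≤ (ε/4) * ‖y - x‖ := hlo.def hc
  rw [Metric.eventually_nhds_iff] at hev
  obtain ⟨δ, hδ, hball⟩ := hev
  have hlen' : ∀ᶠ n in atTop, v n - u n < δ := by
    filter_upwards [(Metric.tendsto_nhds.mp hlen) δ hδ] with n hn
    rw [Real.dist_eq, sub_zero] at hn
    exact lt_of_le_of_lt (le_abs_self _) hn
  filter_upwards [hlen'] with n hn
  have hUV : 0 < v n - u n := sub_pos.2 (huv n)
  have hdu : dist (u n) x < δ := by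
    rw [Real.dist_eq, abs_of_nonpos (by linarith [hu n])]
    have := hv n; linarith
  have hdv : dist (v n) x < δ := by
    rw [Real.dist_eq, abs_of_nonneg (by linarith [hv n])]
    have := hu n; linarith
  have e1 := hball hdv
  have e2 := hball hdu
  rw [Real.norm_eq_abs, Real.norm_eq_abs, smul_eq_mul] at e1 e2
  have hVx : |v n - x| ≤ v n - u n := by
    rw [abs_of_nonneg (by linarith [hv n])]
    linarith [hu n]
  have hUx : |u n - x| ≤ v n - u n := by
    rw [abs_of_nonpos (by linarith [hu n])]
    linarith [hv n]
  have key : |f (v n) - f (u n) - (v n - u n)*d| ≤ (ε/2)*(v n - u n) := by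
    have heq : f (v n) - f (u n) - (v n - u n)*d
        = (f (v n) - f x - (v n - x)*d) - (f (u n) - f x - (u n - x)*d) := by ring
    rw [heq]
    calc |(f (v n) - f x - (v n - x)*d) - (f (u n) - f x - (u n - x)*d)|
        ≤ |f (v n) - f x - (v n - x)*d| + |f (u n) - f x - (u n - x)*d| := abs_sub _ _
      _ ≤ (ε/4) * |v n - x| + (ε/4) * |u n - x| := add_le_add e1 e2
      _ ≤ (ε/4) * (v n - u n) + (ε/4) * (v n - u n) := by
          have b1 := mul_le_mul_of_nonneg_left hVx (le_of_lt hc)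
          have b2 := mul_le_mul_of_nonneg_left hUx (le_of_lt hc)
          linarith
      _ = (ε/2)*(v n - u n) := by ring
  rw [Real.dist_eq]
  have heq2 : (f (v n) - f (u n)) / (v n - u n) - d
      = (f (v n) - f (u n) - (v n - u n)*d)/(v n - u n) := by
    field_simp
  rw [heq2, abs_div, abs_of_pos hUV, div_lt_iff₀ hUV]
  calc |f (v n) - f (u n) - (v n - u n)*d| ≤ (ε/2)*(v n - u n) := key
    _ < ε * (v n - u n) := by nlinarith

/- ### digits of x vs digits of its ternary approximations -/

lemma ndig_floor_eq (x : ℝ) (hx0 : 0 ≤ x) (hx1 : x ≠ 1) {n i : ℕ} (hi : i < n) :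
    ndig n ⌊(3:ℝ)^n * x⌋₊ i = tDigit x i := by
  have e1 : ⌊(3:ℝ)^n*x⌋₊ / 3^(n-(i+1)) = ⌊(3:ℝ)^(i+1)*x⌋₊ := floor_pow_div x hx0 (by omega)
  have e2 : ⌊(3:ℝ)^n*x⌋₊ / 3^(n-i) = ⌊(3:ℝ)^i*x⌋₊ := floor_pow_div x hx0 (by omega)
  have h0 : n - (i+1) = n-1-i := by omega
  have h1 : n - i = (n-1-i)+1 := by omega
  rw [h0] at e1
  rw [h1, pow_succ, ← Nat.div_div_eq_div_mul] at e2
  rw [tDigit_eq_nat x hx0 hx1 i]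
  unfold ndig
  have hle := tDigit_le_floor x i
  omega

example : True := trivial

/- ### approximation sequences -/

noncomputable def uSeq (x : ℝ) (n : ℕ) : ℝ := ((⌊(3:ℝ)^n * x⌋₊ : ℕ) : ℝ)/3^n
noncomputable def vSeq (x : ℝ) (n : ℕ) : ℝ := ((⌊(3:ℝ)^n * x⌋₊ + 1 : ℕ) : ℝ)/3^n

noncomputable def lamSeq (d aa : ℝ) (k : ℕ) : ℕ → ℝ
  | 0 => d
  | j+1 => lamSeq d aa k j * (1 - 3*aa) / (3 * ((k - j : ℕ) : ℝ))

lemma contDiff_prod_md (g : ℕ → ℕ) : ∀ i, ContDiff ℝ (⊤:ℕ∞)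
    (fun b => ∏ j ∈ Finset.range i, md b (g j)) := by
  intro i
  induction i with
  | zero => simpa using contDiff_const (c := (1:ℝ))
  | succ i ih =>
    have h : (fun b => ∏ j ∈ Finset.range (i+1), md b (g j))
        = fun b => (∏ j ∈ Finset.range i, md b (g j)) * md b (g i) := by
      funext b; rw [Finset.prod_range_succ]
    rw [h]; exact ih.mul (contDiff_md _)

section main
variable {x : ℝ}

lemma uSeq_le (hx0 : 0 ≤ x) (n : ℕ) : uSeq x n ≤ x := by
  unfold uSeq
  rw [div_le_iff₀ (by positivity)]
  have := Nat.floor_le (a := (3:ℝ)^n * x) (by positivity)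
  linarith

lemma le_vSeq (hx0 : 0 ≤ x) (n : ℕ) : x ≤ vSeq x n := by
  unfold vSeq
  rw [le_div_iff₀ (by positivity)]
  have := Nat.lt_floor_add_one ((3:ℝ)^n * x)
  push_cast
  linarith

lemma vSeq_sub_uSeq (n : ℕ) : vSeq x n - uSeq x n = (1/3:ℝ)^n := by
  unfold uSeq vSeq
  rw [div_sub_div_same, div_pow, one_pow]
  congr 1
  push_cast
  ring

lemma uSeq_lt_vSeq (n : ℕ) : uSeq x n < vSeq x n := by
  have h := vSeq_sub_uSeq (x := x) n
  have : (0:ℝ) < (1/3:ℝ)^n := by positivity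
  linarith

lemma floor_lt_pow (hx0 : 0 ≤ x) (hx1 : x < 1) (n : ℕ) : ⌊(3:ℝ)^n * x⌋₊ < 3^n := by
  have h : (3:ℝ)^n * x < ((3^n : ℕ):ℝ) := by
    push_cast
    nlinarith [pow_pos (show (0:ℝ) < 3 by norm_num) n]
  exact (Nat.floor_lt (by positivity)).2 h

/-- if `M_{k,a}` is differentiable at `x ∈ (0,1)`, then `M_{k,a}'(x) = 0`. -/
theorem stmt2 (k : ℕ) (hk : 1 ≤ k) (a : ℝ) (ha : a ∈ Set.Ioo (0:ℝ) 1)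
    (x : ℝ) (hx : x ∈ Set.Ioo (0:ℝ) 1) (d : ℝ) (hd : HasDerivAt (Mfun k a) d x) :
    d = 0 := by
  obtain ⟨ha0, ha1⟩ := ha
  obtain ⟨hx0, hx1⟩ := hx
  have hx0' : (0:ℝ) ≤ x := le_of_lt hx0
  have hxne1 : x ≠ 1 := ne_of_lt hx1
  -- the rescaled iterated derivatives
  set A : ℕ → ℕ → ℝ := fun j n => 3^n * iteratedDeriv (k - j) (Gfun x n) a with hA
  -- length tendsto
  have hlen : Tendsto (fun n => vSeq x n - uSeq x n) atTop (𝓝 0) := by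
    have h13 : Tendsto (fun n : ℕ => (1/3:ℝ)^n) atTop (𝓝 0) :=
      tendsto_pow_atTop_nhds_zero_of_lt_one (by norm_num) (by norm_num)
    exact h13.congr (fun n => (vSeq_sub_uSeq n).symm)
  -- eventual smallness
  have hEv : ∀ᶠ n in atTop, ⌊(3:ℝ)^n * x⌋₊ + 1 < 3^n := by
    have h3 : Tendsto (fun n : ℕ => (3:ℝ)^n) atTop atTop :=
      tendsto_pow_atTop_atTop_of_one_lt (by norm_num)
    filter_upwards [h3.eventually_gt_atTop (2/(1-x))] with n hn
    have hx1' : 0 < 1 - x := by linarith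
    rw [div_lt_iff₀ hx1'] at hn
    have hflo := Nat.floor_le (a := (3:ℝ)^n * x) (by positivity)
    have hcast : ((⌊(3:ℝ)^n * x⌋₊ : ℕ):ℝ) + 1 < ((3^n : ℕ):ℝ) := by
      push_cast
      nlinarith
    exact_mod_cast hcast
  -- products are Gfun
  have hGprod : ∀ n b, (∏ i ∈ Finset.range n, md b (ndig n ⌊(3:ℝ)^n * x⌋₊ i)) = Gfun x n b := by
    intro n b
    simp only [Gfun]
    exact Finset.prod_congr rfl (fun i hi => by
      simp only [Finset.mem_range] at hi
      rw [ndig_floor_eq x hx0' hxne1 hi])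
  -- increment of Mfun over ternary intervals
  have hMinc : ∀ n, ⌊(3:ℝ)^n * x⌋₊ + 1 < 3^n →
      Mfun k a (vSeq x n) - Mfun k a (uSeq x n) = iteratedDeriv k (Gfun x n) a := by
    intro n hE
    have hfun : (fun b => Okamoto b (vSeq x n)) = fun b => Okamoto b (uSeq x n) + Gfun x n b := by
      funext b
      have h := okamoto_inc n ⌊(3:ℝ)^n * x⌋₊ hE b
      rw [hGprod n b] at h
      show Okamoto b (vSeq x n) = Okamoto b (uSeq x n) + Gfun x n b
      unfold uSeq vSeq
      linarith [h]
    have hpoly : ContDiff ℝ (⊤:ℕ∞) (fun b => Okamoto b (uSeq x n)) := by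
      have hrw : (fun b => Okamoto b (uSeq x n)) = fun b => ∑ i ∈ Finset.range n,
          (∏ j ∈ Finset.range i, md b (ndig n ⌊(3:ℝ)^n * x⌋₊ j)) * qDig b (ndig n ⌊(3:ℝ)^n * x⌋₊ i) := by
        funext b
        exact okamoto_ratCast b (by omega)
      rw [hrw]
      apply ContDiff.sum
      intro i _
      exact (contDiff_prod_md _ i).mul (contDiff_qDig _)
    simp only [Mfun]
    rw [hfun, itder_add hpoly (contDiff_G x n) k a]
    ring
  -- base case of the limit chain
  have hquot : Tendsto (fun n => (Mfun k a (vSeq x n) - Mfun k a (uSeq x n))/(vSeq x n - uSeq x n))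
      atTop (𝓝 d) :=
    sandwich hd (uSeq_le hx0') (le_vSeq hx0') uSeq_lt_vSeq hlen
  have hbase : Tendsto (A 0) atTop (𝓝 (lamSeq d a k 0)) := by
    show Tendsto (A 0) atTop (𝓝 d)
    apply hquot.congr'
    filter_upwards [hEv] with n hE
    rw [hMinc n hE, vSeq_sub_uSeq n]
    simp only [hA, Nat.sub_zero]
    field_simp
    rw [mul_assoc, ← mul_pow]; norm_num
  -- recursion for A
  have hREC : ∀ j n, j < k → A j (n+1)
      = 3 * md a (tDigit x n) * A j n
        + 3 * ((k-j:ℕ):ℝ) * sE (tDigit x n) * A (j+1) n := by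
    intro j n hj
    have hit : iteratedDeriv ((k-j-1)+1) (Gfun x (n+1)) a
        = md a (tDigit x n) * iteratedDeriv ((k-j-1)+1) (Gfun x n) a
          + (((k-j-1:ℕ):ℝ)+1) * sE (tDigit x n) * iteratedDeriv (k-j-1) (Gfun x n) a := by
      rw [Gfun_succ x n,
        itder_affine_mul (cE (tDigit x n)) (sE (tDigit x n)) (k-j-1) (Gfun x n) (contDiff_G x n) a,
        ← md_eq]
    simp only [hA]
    rw [show k - j = (k-j-1)+1 from by omega, show k - (j+1) = k-j-1 from by omega, hit, pow_succ]
    have hcast : (((k-j-1)+1 : ℕ):ℝ) = ((k-j-1:ℕ):ℝ)+1 := by push_cast; ring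
    rw [hcast]
    ring
  -- recursion at level k
  have hAkval : ∀ n, A k n = 3^n * Gfun x n a := by
    intro n
    simp only [hA, Nat.sub_self, iteratedDeriv_zero]
  have hRECk : ∀ n, A k (n+1) = 3 * md a (tDigit x n) * A k n := by
    intro n
    rw [hAkval, hAkval]
    have hG := congrFun (Gfun_succ x n) a
    rw [hG, ← md_eq, pow_succ]
    ring
  -- the induction step for the chain of limits
  have hstep : ∀ j, j < k → Tendsto (A j) atTop (𝓝 (lamSeq d a k j)) →
      Tendsto (A (j+1)) atTop (𝓝 (lamSeq d a k (j+1))) := by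
    intro j hj hAj
    have hK1 : (1:ℝ) ≤ ((k-j:ℕ):ℝ) := by
      have : 1 ≤ k - j := by omega
      exact_mod_cast this
    have hKne : ((k-j:ℕ):ℝ) ≠ 0 := by linarith
    have hpt : ∀ n, A (j+1) n - lamSeq d a k (j+1)
        = ((A j (n+1) - lamSeq d a k j) - 3 * md a (tDigit x n) * (A j n - lamSeq d a k j))
            / (3 * ((k-j:ℕ):ℝ) * sE (tDigit x n)) := by
      intro n
      have hsne : sE (tDigit x n) ≠ 0 := by
        unfold sE; split <;> norm_num
      have hden : 3 * ((k-j:ℕ):ℝ) * sE (tDigit x n) ≠ 0 :=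
        mul_ne_zero (mul_ne_zero (by norm_num) hKne) hsne
      have hrec := hREC j n hj
      have hA1 : A (j+1) n = (A j (n+1) - 3 * md a (tDigit x n) * A j n)
          / (3 * ((k-j:ℕ):ℝ) * sE (tDigit x n)) := by
        rw [eq_div_iff hden]
        linear_combination -hrec
      have hlam1 : lamSeq d a k (j+1)
          = (lamSeq d a k j - 3 * md a (tDigit x n) * lamSeq d a k j)
              / (3 * ((k-j:ℕ):ℝ) * sE (tDigit x n)) := by
        show lamSeq d a k j * (1 - 3*a) / (3 * ((k - j : ℕ) : ℝ)) = _
        by_cases he : tDigit x n = 1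
        · unfold md sE
          rw [if_pos he, if_pos he]
          field_simp
          ring
        · unfold md sE
          rw [if_neg he, if_neg he]
          field_simp
      rw [hA1, hlam1, div_sub_div_same]
      congr 1
      ring
    have hbnd : ∀ n, ‖A (j+1) n - lamSeq d a k (j+1)‖
        ≤ (|A j (n+1) - lamSeq d a k j| + 3 * |A j n - lamSeq d a k j|)/3 := by
      intro n
      rw [Real.norm_eq_abs, hpt n, abs_div]
      have hmd : |md a (tDigit x n)| ≤ 1 := by
        unfold md; split
        · rw [abs_le]; constructor <;> linarith
        · rw [abs_le]; constructor <;> linarith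
      have hsE : (1:ℝ) ≤ |sE (tDigit x n)| := by
        unfold sE; split <;> norm_num
      have hdenge : (3:ℝ) ≤ |3 * ((k-j:ℕ):ℝ) * sE (tDigit x n)| := by
        rw [abs_mul, abs_mul]
        have h3 : |(3:ℝ)| = 3 := by norm_num
        have hKabs : |((k-j:ℕ):ℝ)| = ((k-j:ℕ):ℝ) := abs_of_nonneg (by linarith)
        rw [h3, hKabs]
        nlinarith
      have hnum : |(A j (n+1) - lamSeq d a k j) - 3 * md a (tDigit x n) * (A j n - lamSeq d a k j)|
          ≤ |A j (n+1) - lamSeq d a k j| + 3 * |A j n - lamSeq d a k j| := by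
        calc |(A j (n+1) - lamSeq d a k j) - 3 * md a (tDigit x n) * (A j n - lamSeq d a k j)|
            ≤ |A j (n+1) - lamSeq d a k j| + |3 * md a (tDigit x n) * (A j n - lamSeq d a k j)| :=
              abs_sub _ _
          _ ≤ _ := by
              rw [abs_mul, abs_mul]
              have h3 : |(3:ℝ)| = 3 := by norm_num
              rw [h3]
              nlinarith [abs_nonneg (A j n - lamSeq d a k j), abs_nonneg (md a (tDigit x n))]
      exact div_le_div₀ (by positivity) hnum (by norm_num) hdenge
    have h1 : Tendsto (fun n => A j n - lamSeq d a k j) atTop (𝓝 0) :=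
      tendsto_sub_nhds_zero_iff.2 hAj
    have h2 : Tendsto (fun n => A j (n+1) - lamSeq d a k j) atTop (𝓝 0) :=
      h1.comp (tendsto_add_atTop_nat 1)
    have hg : Tendsto (fun n => (|A j (n+1) - lamSeq d a k j| + 3 * |A j n - lamSeq d a k j|)/3)
        atTop (𝓝 0) := by
      have := ((h2.abs).add ((h1.abs).const_mul 3)).div_const 3
      simpa using this
    exact tendsto_sub_nhds_zero_iff.1 (squeeze_zero_norm hbnd hg)
  -- the chain of limits
  have hmain : ∀ j, j ≤ k → Tendsto (A j) atTop (𝓝 (lamSeq d a k j)) := by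
    intro j
    induction j with
    | zero => intro _; exact hbase
    | succ j ihj =>
      intro hjk
      exact hstep j (by omega) (ihj (by omega))
  have hAk : Tendsto (A k) atTop (𝓝 (lamSeq d a k k)) := hmain k le_rfl
  by_cases ha13 : a = 1/3
  · -- at a = 1/3 we get an outright contradiction
    exfalso
    have hG13 : ∀ n, Gfun x n a = (1/3:ℝ)^n := by
      intro n
      unfold Gfun
      rw [Finset.prod_congr rfl (fun i _ => ?_), Finset.prod_const, Finset.card_range]
      unfold md
      subst ha13
      split <;> norm_num
    have hconst : ∀ n, A k n = 1 := by
      intro n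
      rw [hAkval n, hG13 n, one_div, inv_pow, mul_inv_cancel₀ (by positivity : ((3:ℝ)^n) ≠ 0)]
    have hone : Tendsto (A k) atTop (𝓝 1) :=
      Tendsto.congr (fun n => (hconst n).symm) tendsto_const_nhds
    have heq1 : lamSeq d a k k = 1 := tendsto_nhds_unique hAk hone
    have hk0 : lamSeq d a k k = 0 := by
      obtain ⟨kk, rfl⟩ : ∃ kk, k = kk + 1 := ⟨k-1, by omega⟩
      show lamSeq d a (kk+1) kk * (1 - 3*a) / (3 * (((kk+1) - kk : ℕ) : ℝ)) = 0
      subst ha13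
      norm_num
    rw [heq1] at hk0
    exact one_ne_zero (hk0 : (1:ℝ) = 0)
  · -- a ≠ 1/3 : derivative must vanish
    by_contra hdne
    have hlamne : ∀ j, j ≤ k → lamSeq d a k j ≠ 0 := by
      intro j
      induction j with
      | zero => intro _; exact hdne
      | succ j ihj =>
        intro hjk
        have hne1 : lamSeq d a k j ≠ 0 := ihj (by omega)
        have h13 : (1:ℝ) - 3*a ≠ 0 := by
          intro hcc; apply ha13; linarith
        have hKne : (3:ℝ) * ((k-j:ℕ):ℝ) ≠ 0 := by
          apply mul_ne_zero (by norm_num)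
          exact Nat.cast_ne_zero.2 (by omega)
        show lamSeq d a k j * (1 - 3*a) / (3 * ((k - j : ℕ) : ℝ)) ≠ 0
        exact div_ne_zero (mul_ne_zero hne1 h13) hKne
    have hlamkne := hlamne k le_rfl
    have hev0 : ∀ᶠ n in atTop, A k n ≠ 0 := hAk.eventually_ne hlamkne
    have hratio : Tendsto (fun n => A k (n+1) / A k n) atTop (𝓝 1) := by
      have hcomp : Tendsto (fun n => A k (n+1)) atTop (𝓝 (lamSeq d a k k)) :=
        hAk.comp (tendsto_add_atTop_nat 1)
      have := hcomp.div hAk hlamkne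
      rw [div_self hlamkne] at this; exact this
    have hratio' : Tendsto (fun n => 3 * md a (tDigit x n)) atTop (𝓝 1) := by
      apply hratio.congr'
      filter_upwards [hev0] with n hne
      rw [hRECk n, mul_div_assoc, div_self hne, mul_one]
    set δ := min (|3*a - 1|) (|3*(1-2*a) - 1|) with hdd
    have hδpos : 0 < δ := by
      apply lt_min
      · apply abs_pos.2; intro hcc; apply ha13; linarith
      · apply abs_pos.2; intro hcc; apply ha13; linarith
    have hfar : ∀ n, δ ≤ |3 * md a (tDigit x n) - 1| := by
      intro n
      unfold md; split
      · have : δ ≤ |3*(1-2*a) - 1| := min_le_right _ _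
        calc δ ≤ |3*(1-2*a) - 1| := this
          _ = |3 * (1-2*a) - 1| := by ring_nf
      · have : δ ≤ |3*a - 1| := min_le_left _ _
        calc δ ≤ |3*a - 1| := this
          _ = |3 * a - 1| := by ring_nf
    obtain ⟨n, hn⟩ := ((Metric.tendsto_nhds.mp hratio') δ hδpos).exists
    rw [Real.dist_eq] at hn
    exact absurd hn (not_lt.2 (hfar n))

end main
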